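/- Suppose z₁, z₂ ∈ ℂ* and a, b ∈ ℂ with a ≠ b satisfy conj(z₁)·conj(z₂)·u⁴ - (conj(z₁)+conj(z₂))·u³ + (z₁+z₂)·u - z₁·z₂ = conj(z₁)·conj(z₂)·(u-a)³·(u-b) as polynomials in u. Then |a| = |b| = 1, b = -a, and |z₁ + z₂| = 2·|z₁·z₂|. -/

import Mathlib

open Complex ComplexConjugate

theorem triple_zero_case (z₁ z₂ a b : ℂ) (hz₁ : z₁ ≠ 0) (hz₂ : z₂ ≠ 0) (hab : a ≠ b)
    (h : ∀ u : ℂ, conj z₁ * conj z₂ * u ^ 4 - (conj z₁ + conj z₂) * u ^ 3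
        + (z₁ + z₂) * u - z₁ * z₂
      = conj z₁ * conj z₂ * (u - a) ^ 3 * (u - b)) :
    ‖a‖ = 1 ∧ ‖b‖ = 1 ∧ b = -a ∧
      ‖z₁ + z₂‖ = 2 * ‖z₁ * z₂‖ := by
  have hw : conj z₁ * conj z₂ ≠ 0 :=
    mul_ne_zero ((map_ne_zero _).mpr hz₁) ((map_ne_zero _).mpr hz₂)
  have e0 : z₁ * z₂ = -(conj z₁ * conj z₂ * a ^ 3 * b) := by linear_combination -(h 0)
  have e2 : conj z₁ * conj z₂ * (a * (a + b)) = 0 := by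
    linear_combination (h 0) / 3 - (h 1 + h (-1)) / 6
  have hp : z₁ * z₂ ≠ 0 := mul_ne_zero hz₁ hz₂
  have ha : a ≠ 0 := by
    intro h0
    apply hp
    rw [e0, h0]; ring
  have hba : a + b = 0 := by
    rcases mul_eq_zero.mp e2 with h' | h'
    · exact absurd h' hw
    · rcases mul_eq_zero.mp h' with h'' | h''
      · exact absurd h'' ha
      · exact h''
  have hb : b = -a := by linear_combination hba
  subst hb
  have e3 : conj z₁ + conj z₂ = 2 * (conj z₁ * conj z₂) * a := by
    linear_combination -(h 2 - h (-2) - 2 * h 1 + 2 * h (-1)) / 12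
  have e1 : z₁ + z₂ = 2 * (conj z₁ * conj z₂) * a ^ 3 := by
    linear_combination (8 * (h 1 - h (-1)) - (h 2 - h (-2))) / 12
  have A1 : ‖z₁ + z₂‖ = 2 * ‖z₁ * z₂‖ * (‖a‖) ^ 3 := by
    rw [e1]
    simp [map_mul, map_pow, Complex.norm_conj, Complex.norm_two]
  have A2 : ‖z₁ + z₂‖ = 2 * ‖z₁ * z₂‖ * ‖a‖ := by
    have hc : conj (z₁ + z₂) = 2 * (conj z₁ * conj z₂) * a := by
      rw [map_add]; exact e3
    calc ‖z₁ + z₂‖ = ‖conj (z₁ + z₂)‖ := (Complex.norm_conj _).symm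
      _ = ‖2 * (conj z₁ * conj z₂) * a‖ := by rw [hc]
      _ = 2 * ‖z₁ * z₂‖ * ‖a‖ := by
          simp [map_mul, Complex.norm_conj, Complex.norm_two]
  have hpp : 0 < ‖z₁ * z₂‖ := norm_pos_iff.mpr hp
  have hap : 0 < ‖a‖ := norm_pos_iff.mpr ha
  have ht : ‖a‖ ^ 3 = ‖a‖ := by
    have h' := A1.symm.trans A2
    have h2 : (2 * ‖z₁ * z₂‖) * ‖a‖ ^ 3
        = (2 * ‖z₁ * z₂‖) * ‖a‖ := by linarith
    exact mul_left_cancel₀ (by positivity) h2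
  have hfac : (‖a‖ - 1) * (‖a‖ * (‖a‖ + 1)) = 0 := by
    linear_combination ht
  have hA : ‖a‖ = 1 := by
    rcases mul_eq_zero.mp hfac with h' | h'
    · linarith [sub_eq_zero.mp h']
    · nlinarith
  refine ⟨hA, ?_, rfl, ?_⟩
  · simpa using hA
  · rw [A2, hA, mul_one]
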